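/- arXiv:2511.18923 — 2 statements merged into one kernel-verified Lean document; each statement's English description precedes it below -/
import Mathlib

section
/- Let f : [0,T] → ℝ be differentiable with f'(t) ≤ -σ·|f(t)| for all t ∈ [0,T], where σ > 0. Then for all t ∈ [0,T], f(T)·e^{-σ(T-t)} ≤ f(t) ≤ f(0)·e^{-σ t}. -/
open Real Set

theorem stmt_0 (T σ : ℝ) (hT : 0 < T) (hσ : 0 < σ) (f f' : ℝ → ℝ)
    (hderiv : ∀ t ∈ Icc (0:ℝ) T, HasDerivAt f (f' t) t)
    (hineq : ∀ t ∈ Icc (0:ℝ) T, f' t ≤ -σ * |f t|) :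
    ∀ t ∈ Icc (0:ℝ) T,
      f T * Real.exp (-σ * (T - t)) ≤ f t ∧ f t ≤ f 0 * Real.exp (-σ * t) := by
  -- auxiliary: for c = σ or c = -σ, the function f t * exp (c * t) is antitone on Icc 0 T
  have key : ∀ c : ℝ, (∀ x ∈ Icc (0:ℝ) T, f' x + c * f x ≤ 0) →
      AntitoneOn (fun t => f t * Real.exp (c * t)) (Icc 0 T) := by
    intro c hc
    have hd : ∀ x ∈ Icc (0:ℝ) T,
        HasDerivAt (fun t => f t * Real.exp (c * t))
          ((f' x + c * f x) * Real.exp (c * x)) x := by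
      intro x hx
      have h1 : HasDerivAt (fun t => Real.exp (c * t)) (c * Real.exp (c * x)) x := by
        have := (Real.hasDerivAt_exp (c * x)).comp x ((hasDerivAt_id x).const_mul c)
        rw [mul_one, mul_comm (Real.exp (c * x))] at this
        exact this
      have := (hderiv x hx).mul h1
      have e : (f' x + c * f x) * Real.exp (c * x) = f' x * Real.exp (c * x) + f x * (c * Real.exp (c * x)) := by ring
      rw [e]
      exact this
    apply antitoneOn_of_deriv_nonpos (convex_Icc 0 T)
    · exact ContinuousOn.mul (fun x hx => (hderiv x hx).continuousAt.continuousWithinAt)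
        (Real.continuous_exp.comp (continuous_const.mul continuous_id)).continuousOn
    · intro x hx
      rw [interior_Icc] at hx
      exact ((hd x (Ioo_subset_Icc_self hx)).differentiableAt).differentiableWithinAt
    · intro x hx
      rw [interior_Icc] at hx
      rw [(hd x (Ioo_subset_Icc_self hx)).deriv]
      exact mul_nonpos_of_nonpos_of_nonneg (hc x (Ioo_subset_Icc_self hx)) (Real.exp_pos _).le
  have hup : AntitoneOn (fun t => f t * Real.exp (σ * t)) (Icc 0 T) := by
    apply key
    intro x hx
    have := hineq x hx
    have h2 : f x ≤ |f x| := le_abs_self _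
    nlinarith [abs_nonneg (f x)]
  have hlo : AntitoneOn (fun t => f t * Real.exp (-σ * t)) (Icc 0 T) := by
    apply key
    intro x hx
    have := hineq x hx
    have h2 : -|f x| ≤ f x := neg_abs_le _
    nlinarith [abs_nonneg (f x)]
  intro t ht
  obtain ⟨ht0, htT⟩ := ht
  have hT' : T ∈ Icc (0:ℝ) T := ⟨hT.le, le_refl T⟩
  have h0' : (0:ℝ) ∈ Icc (0:ℝ) T := ⟨le_refl 0, hT.le⟩
  constructor
  · have := hlo ⟨ht0, htT⟩ hT' htT
    simp only at this
    -- f T * exp (-σ T) ≤ f t * exp (-σ t)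
    have hmul := mul_le_mul_of_nonneg_right this (Real.exp_pos (σ * t)).le
    rw [mul_assoc, mul_assoc, ← Real.exp_add, ← Real.exp_add] at hmul
    have e1 : -σ * T + σ * t = -σ * (T - t) := by ring
    have e2 : -σ * t + σ * t = 0 := by ring
    rw [e1, e2, Real.exp_zero, mul_one] at hmul
    exact hmul
  · have := hup h0' ⟨ht0, htT⟩ ht0
    simp only [mul_zero, Real.exp_zero, mul_one] at this
    have hmul := mul_le_mul_of_nonneg_right this (Real.exp_pos (-σ * t)).le
    rw [mul_assoc, ← Real.exp_add] at hmul
    have e1 : σ * t + -σ * t = 0 := by ring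
    rw [e1, Real.exp_zero, mul_one] at hmul
    exact hmul
end

section
/- Let μ, v, m̄ be measurable with m̄ > 0, ∫ μ = 0, and define v̂ = v - ∫ m̄·v (with ∫ m̄ = 1). Then ∫ μ·v̂ = ∫ μ·v; moreover, using Young's inequality μ·v̂ ≥ -μ²/(2m̄) - m̄·v̂²/2 and the weighted Poincaré inequality ∫ m̄ v̂² ≤ C_P ∫ m̄|Dv|², one obtains ∫ μ·v + μ²/m̄ ≥ -(C_P/2) ∫ m̄|Dv|². -/
open MeasureTheory

theorem stmt_16 {Ω : Type*} [MeasureSpace Ω] (n : ℕ)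
    (mbar μ v : Ω → ℝ) (Dv : Ω → EuclideanSpace ℝ (Fin n)) (CP : ℝ) (hCP : 0 < CP)
    (hm : ∀ x, 0 < mbar x)
    (hm1 : (∫ x, mbar x) = 1) (hμ0 : (∫ x, μ x) = 0)
    (hIμ : Integrable μ) (hIμv : Integrable (fun x => μ x * v x))
    (hIμ2 : Integrable (fun x => μ x ^ 2 / mbar x))
    (hIv2 : Integrable (fun x => mbar x * (v x - ∫ y, mbar y * v y) ^ 2))
    (hPoin : (∫ x, mbar x * (v x - ∫ y, mbar y * v y) ^ 2)
        ≤ CP * ∫ x, mbar x * ‖Dv x‖ ^ 2) :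
    (∫ x, μ x * (v x - ∫ y, mbar y * v y)) = ∫ x, μ x * v x
    ∧ (∫ x, μ x * v x + μ x ^ 2 / mbar x)
        ≥ -(CP / 2) * ∫ x, mbar x * ‖Dv x‖ ^ 2 := by
  set c : ℝ := ∫ y, mbar y * v y with hc
  have hfun : (fun x => μ x * (v x - c)) = fun x => μ x * v x - c * μ x := by
    ext x; ring
  have h1 : (∫ x, μ x * (v x - c)) = ∫ x, μ x * v x := by
    rw [hfun, integral_sub hIμv (hIμ.const_mul c), integral_const_mul, hμ0,
      mul_zero, sub_zero]
  refine ⟨h1, ?_⟩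
  have hIμvc : Integrable (fun x => μ x * (v x - c)) := by
    rw [hfun]; exact hIμv.sub (hIμ.const_mul c)
  have hL : Integrable (fun x => μ x * (v x - c) + μ x ^ 2 / mbar x) := hIμvc.add hIμ2
  have hRf : (fun x => μ x ^ 2 / mbar x / 2 - mbar x * (v x - c) ^ 2 / 2)
      = fun x => (1/2) * (μ x ^ 2 / mbar x) - (1/2) * (mbar x * (v x - c) ^ 2) := by
    ext x; ring
  have hR : Integrable (fun x => μ x ^ 2 / mbar x / 2 - mbar x * (v x - c) ^ 2 / 2) := by
    rw [hRf]; exact (hIμ2.const_mul _).sub (hIv2.const_mul _)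
  have hpw : ∀ x, μ x ^ 2 / mbar x / 2 - mbar x * (v x - c) ^ 2 / 2
      ≤ μ x * (v x - c) + μ x ^ 2 / mbar x := by
    intro x
    have hmx := hm x
    have ht : mbar x * (mbar x)⁻¹ = 1 := mul_inv_cancel₀ hmx.ne'
    have htp : 0 < (mbar x)⁻¹ := inv_pos.mpr hmx
    rw [div_eq_mul_inv (μ x ^ 2)]
    nlinarith [sq_nonneg (μ x + mbar x * (v x - c)), sq_nonneg (μ x), hmx, ht, htp]
  have hmono : (∫ x, μ x ^ 2 / mbar x / 2 - mbar x * (v x - c) ^ 2 / 2)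
      ≤ ∫ x, μ x * (v x - c) + μ x ^ 2 / mbar x := integral_mono hR hL hpw
  have hIμ2pos : (0:ℝ) ≤ ∫ x, μ x ^ 2 / mbar x := by
    apply integral_nonneg
    intro x
    exact div_nonneg (sq_nonneg _) (hm x).le
  have hRval : (∫ x, μ x ^ 2 / mbar x / 2 - mbar x * (v x - c) ^ 2 / 2)
      = (1/2) * (∫ x, μ x ^ 2 / mbar x) - (1/2) * (∫ x, mbar x * (v x - c) ^ 2) := by
    rw [hRf, integral_sub (hIμ2.const_mul _) (hIv2.const_mul _),
      integral_const_mul, integral_const_mul]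
  have hLval : (∫ x, μ x * (v x - c) + μ x ^ 2 / mbar x)
      = ∫ x, μ x * v x + μ x ^ 2 / mbar x := by
    rw [integral_add hIμvc hIμ2, integral_add hIμv hIμ2, h1]
  rw [ge_iff_le, ← hLval]
  calc -(CP / 2) * ∫ x, mbar x * ‖Dv x‖ ^ 2
      ≤ (1/2) * (∫ x, μ x ^ 2 / mbar x) - (1/2) * (∫ x, mbar x * (v x - c) ^ 2) := by
        nlinarith [hPoin, hIμ2pos]
    _ = ∫ x, μ x ^ 2 / mbar x / 2 - mbar x * (v x - c) ^ 2 / 2 := hRval.symm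
    _ ≤ _ := hmono
end
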